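/- The qubit routing problem is NP-hard even when G is a star and P is an antichain. Specifically, given a graph H = (V(H), E(H)) with n vertices, construct the instance with tokens T = V(H) ∪ {0}, star G with center 0 and leaves {1,...,n}, S = E(H) with varphi the identity on edges, P an antichain, and f_0 placing token 0 at the center. Then there is a feasible swap sequence of length k if and only if H has a vertex cover of size k. -/

import Mathlib

/-- Vertices of the star graph with center `none` and leaves `some j`, `j ∈ Fin n`.
The same type serves as the token set: token `none` is the extra token `0`, and token
`some v` corresponds to the vertex `v` of the graph `H`. -/
abbrev StarV (n : ℕ) := Option (Fin n)

/-- A single swap on the star: exchange the tokens on the center and a leaf. -/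
def StarSwap {n : ℕ} (f g : StarV n ≃ StarV n) : Prop :=
  ∃ j : Fin n, g = (Equiv.swap (none : StarV n) (some j)).trans f

/-- `F 0 ~> ⋯ ~> F l` is a swap sequence on the star. -/
def StarSeq {n : ℕ} (l : ℕ) (F : ℕ → (StarV n ≃ StarV n)) : Prop :=
  ∀ i, i < l → StarSwap (F i) (F (i + 1))

/-- Feasibility (the poset is an antichain, so there are no order constraints): every
edge `{u,v}` of `H` is realized at some placement of the sequence, i.e. tokens `u` and `v`
occupy adjacent vertices of the star, which means one of them is at the center. -/
def StarFeasible {n : ℕ} (H : SimpleGraph (Fin n)) (l : ℕ)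
    (F : ℕ → (StarV n ≃ StarV n)) : Prop :=
  ∀ u v : Fin n, H.Adj u v →
    ∃ i ≤ l, (F i).symm (some u) = none ∨ (F i).symm (some v) = none

/-- One greedy step: bring token `x` to the center (if it is on a leaf). -/
def starStep {n : ℕ} (d : Fin n) (f : StarV n ≃ StarV n) (x : Fin n) :
    StarV n ≃ StarV n :=
  (Equiv.swap (none : StarV n) (some ((f.symm (some x)).getD d))).trans f

lemma starStep_symm {n : ℕ} (d : Fin n) (f : StarV n ≃ StarV n) (x : Fin n) :
    (starStep d f x).symm (some x) = none ∨ f.symm (some x) = none := by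
  cases h : f.symm (some x) with
  | none => exact Or.inr rfl
  | some j =>
    left
    simp [starStep, h, Equiv.swap_apply_right]

/-- in the star construction from a graph `H` on `n ≥ 1` vertices, with the
initial placement putting token `0` at the center, there is a feasible swap sequence of
length `k` iff `H` has a vertex cover of size (at most) `k`. -/
theorem stmt10 {n : ℕ} (hn : 0 < n) (k : ℕ) (H : SimpleGraph (Fin n))
    (f₀ : StarV n ≃ StarV n) (hf₀ : f₀ none = none) :
    (∃ F : ℕ → (StarV n ≃ StarV n), StarSeq k F ∧ F 0 = f₀ ∧ StarFeasible H k F) ↔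
    (∃ X : Finset (Fin n), X.card ≤ k ∧ ∀ u v, H.Adj u v → u ∈ X ∨ v ∈ X) := by
  obtain ⟨d⟩ : Nonempty (Fin n) := ⟨⟨0, hn⟩⟩
  constructor
  · rintro ⟨F, hseq, hF0, hfeas⟩
    refine ⟨(Finset.Icc 1 k).image (fun i => ((F i) none).getD d), ?_, ?_⟩
    · exact Finset.card_image_le.trans (by simp)
    · intro u v huv
      obtain ⟨i, hik, hi⟩ := hfeas u v huv
      have key : ∀ w : Fin n, (F i).symm (some w) = none →
          w ∈ (Finset.Icc 1 k).image (fun i => ((F i) none).getD d) := by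
        intro w hw
        have hFw : F i none = some w := by
          have := (F i).apply_symm_apply (some w); rw [hw] at this; exact this
        have hi0 : i ≠ 0 := by
          intro h0
          rw [h0, hF0, hf₀] at hFw
          cases hFw
        exact Finset.mem_image.2 ⟨i, Finset.mem_Icc.2 ⟨Nat.one_le_iff_ne_zero.2 hi0, hik⟩,
          by rw [hFw]; rfl⟩
      rcases hi with hw | hw
      · exact Or.inl (key u hw)
      · exact Or.inr (key v hw)
  · rintro ⟨X, hXk, hcov⟩
    set L : List (Fin n) := X.toList ++ List.replicate (k - X.card) d with hL
    have hLlen : L.length = k := by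
      simp [hL]
      omega
    set F : ℕ → StarV n ≃ StarV n := fun i => (L.take i).foldl (starStep d) f₀ with hF
    have hstep : ∀ i (hik : i < k), F (i+1) = starStep d (F i) (L.get ⟨i, by omega⟩) := by
      intro i hik
      have ht : L.take (i+1) = L.take i ++ [L.get ⟨i, by omega⟩] := by
        rw [List.take_succ]
        simp [List.getElem?_eq_getElem (by omega : i < L.length)]
      show (L.take (i+1)).foldl (starStep d) f₀ = _
      rw [ht, List.foldl_append]
      rfl
    have hmem : ∀ w : Fin n, w ∈ X → ∃ i ≤ k,
        (F i).symm (some w) = none := by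
      intro w hw
      have hwL : w ∈ X.toList := Finset.mem_toList.2 hw
      obtain ⟨i, hiw⟩ := List.mem_iff_get.1 hwL
      have hik : (i : ℕ) < k := lt_of_lt_of_le (by simpa using i.isLt) hXk
      have hLi : L.get ⟨i, by omega⟩ = w := by
        rw [← hiw]
        show (X.toList ++ List.replicate (k - X.card) d)[(i:ℕ)]'_ = _
        rw [List.getElem_append_left (by simpa using i.isLt)]
        rfl
      rcases starStep_symm d (F i) w with h | h
      · refine ⟨i + 1, by omega, ?_⟩
        rw [hstep i hik, hLi]; exact h
      · exact ⟨i, by omega, h⟩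
    refine ⟨F, ?_, ?_, ?_⟩
    · intro i hik
      exact ⟨_, hstep i hik⟩
    · simp [hF]
    · intro u v huv
      rcases hcov u v huv with hu | hu
      · obtain ⟨i, hik, h⟩ := hmem u hu
        exact ⟨i, hik, Or.inl h⟩
      · obtain ⟨i, hik, h⟩ := hmem v hu
        exact ⟨i, hik, Or.inr h⟩
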